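/- The polynomial B = β·∏_{k∈Q} γ_k is SL_2(F_q)-invariant: σ_c(B) = B for all c ∈ F_q and τ(B) = B. -/

import Mathlib

open MvPolynomial Finset
open scoped Classical

/-- The algebra automorphism of `F[a0,a1,a2]` induced by the upper-triangular matrix `σ_c`:
`a0 ↦ a0`, `a1 ↦ a1 + c·a0`, `a2 ↦ a2 + 2c·a1 + c²·a0`.  Here `a_i = X i`. -/
noncomputable def σP (F : Type*) [Field F] (c : F) :
    MvPolynomial (Fin 3) F →ₐ[F] MvPolynomial (Fin 3) F :=
  aeval ![X 0, X 1 + C c * X 0, X 2 + C (2 * c) * X 1 + C (c ^ 2) * X 0]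

/-- The algebra automorphism of `F[a0,a1,a2]` induced by `τ`: `a0 ↦ a2`, `a1 ↦ -a1`, `a2 ↦ a0`. -/
noncomputable def τA (F : Type*) [Field F] :
    MvPolynomial (Fin 3) F →ₐ[F] MvPolynomial (Fin 3) F :=
  aeval ![X 2, -X 1, X 0]

set_option linter.unusedSectionVars false

namespace BInvAux

variable {Fq : Type*} [Field Fq]

noncomputable def piMap (i : Fq ⊕ Fq × Fq) : Fq ⊕ Fq × Fq :=
  match i with
  | .inl c => if c = 0 then .inl 0 else .inr (((2*c)⁻¹)^2, -(2*c)⁻¹)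
  | .inr p => if p.2^2 = p.1 then .inl (-(2*p.2)⁻¹)
      else .inr (p.1/(p.2^2-p.1)^2, -p.2/(p.2^2-p.1))

noncomputable def sc (i : Fq ⊕ Fq × Fq) : Fq :=
  match i with
  | .inl c => if c = 0 then -1 else c
  | .inr p => if p.2^2 = p.1 then -2*p.2 else p.2^2-p.1

variable [Fintype Fq]

noncomputable def SS (Fq : Type*) [Field Fq] [Fintype Fq] : Finset (Fq ⊕ Fq × Fq) :=
  Finset.univ.disjSum ((Finset.univ.filter (fun k : Fq => k ≠ 0 ∧ IsSquare k)) ×ˢ Finset.univ)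

lemma prod_erase_zero (h2 : (2:Fq) ≠ 0) : ∏ d ∈ Finset.univ.erase (0:Fq), d = -1 := by
  have hne : (-1 : Fq) ≠ 1 := by
    intro h
    apply h2
    linear_combination -h
  have h1 : (1:Fq) ∈ Finset.univ.erase (0:Fq) := by simp
  have hm1 : (-1:Fq) ∈ (Finset.univ.erase (0:Fq)).erase 1 := by
    simp [hne]
  rw [← Finset.mul_prod_erase _ _ h1, ← Finset.mul_prod_erase _ _ hm1]
  have hE : ∏ d ∈ ((Finset.univ.erase (0:Fq)).erase 1).erase (-1), d = 1 := by
    apply Finset.prod_involution (g := fun a _ => a⁻¹)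
    · intro a ha
      simp only [Finset.mem_erase] at ha
      exact mul_inv_cancel₀ ha.2.2.1
    · intro a ha _
      simp only [Finset.mem_erase] at ha
      intro h
      have : a * a = 1 := by
        nth_rewrite 1 [← inv_inv a]
        rw [h]
        exact inv_mul_cancel₀ (by rw [← h]; exact inv_ne_zero ha.2.2.1)
      have : (a - 1) * (a + 1) = 0 := by linear_combination this
      rcases mul_eq_zero.1 this with h' | h'
      · exact ha.2.1 (by linear_combination h')
      · exact ha.1 (by linear_combination h')
    · intro a _
      exact inv_inv a
    · intro a ha
      simp only [Finset.mem_erase] at ha ⊢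
      refine ⟨?_, ?_, inv_ne_zero ha.2.2.1, Finset.mem_univ _⟩
      · intro h; apply ha.1; rw [← inv_inv a, h, inv_neg, inv_one]
      · intro h; apply ha.2.1; rw [← inv_inv a, h, inv_one]
  rw [hE]
  ring

lemma prod_shift (a : Fq) :
    ∏ c ∈ Finset.univ.erase a, (c - a) = ∏ d ∈ Finset.univ.erase (0:Fq), d := by
  apply Finset.prod_nbij' (fun c => c - a) (fun d => d + a)
  · intro x hx
    simp only [Finset.mem_erase] at hx ⊢
    exact ⟨sub_ne_zero.2 hx.1, Finset.mem_univ _⟩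
  · intro x hx
    simp only [Finset.mem_erase] at hx ⊢
    refine ⟨fun h => hx.1 (by linear_combination h), Finset.mem_univ _⟩
  · intro x _; ring
  · intro x _; ring
  · intro x _; rfl

end BInvAux

namespace BInvAux2
open BInvAux

variable {Fq : Type*} [Field Fq] [Fintype Fq]

lemma prod_sc_gamma (h2 : (2:Fq) ≠ 0) (s : Fq) (hs : s ≠ 0) :
    ∏ c : Fq, sc (Sum.inr ((s^2 : Fq), c)) = 1 := by
  have hns : (-s : Fq) ≠ s := by
    intro h
    apply hs
    have : (2:Fq) * s = 0 := by linear_combination -h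
    rcases mul_eq_zero.1 this with h' | h'
    · exact absurd h' h2
    · exact h'
  have hmem : (-s : Fq) ∈ Finset.univ.erase s := by simp [hns]
  rw [← Finset.mul_prod_erase _ _ (Finset.mem_univ s),
      ← Finset.mul_prod_erase _ _ hmem]
  set E : Finset Fq := (Finset.univ.erase s).erase (-s) with hEdef
  have hgE : ∀ c ∈ E, sc (Sum.inr ((s^2 : Fq), c)) = (c - s) * (c + s) := by
    intro c hc
    simp only [hEdef, Finset.mem_erase] at hc
    have hcs : c^2 ≠ s^2 := by
      intro h
      have : (c - s) * (c + s) = 0 := by linear_combination h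
      rcases mul_eq_zero.1 this with h' | h'
      · exact hc.2.1 (by linear_combination h')
      · exact hc.1 (by linear_combination h')
    show (if c^2 = s^2 then -2*c else c^2 - s^2) = (c - s) * (c + s)
    rw [if_neg hcs]; ring
  rw [Finset.prod_congr rfl hgE, Finset.prod_mul_distrib]
  have hP1 : (-s - s) * ∏ c ∈ E, (c - s) = -1 := by
    have := Finset.mul_prod_erase (Finset.univ.erase s) (fun c => c - s) hmem
    rw [prod_shift, prod_erase_zero h2] at this
    exact this
  have hmem' : s ∈ Finset.univ.erase (-s) := by simp [Ne.symm hns]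
  have hP2 : (s + s) * ∏ c ∈ E, (c + s) = -1 := by
    have := Finset.mul_prod_erase (Finset.univ.erase (-s)) (fun c => c + s) hmem'
    have hsub : ∏ c ∈ Finset.univ.erase (-s), (c + s)
        = ∏ c ∈ Finset.univ.erase (-s), (c - (-s)) := by
      apply Finset.prod_congr rfl
      intro c _; ring
    rw [hsub, prod_shift, prod_erase_zero h2, Finset.erase_right_comm, ← hEdef] at this
    exact this
  have hc1 : sc (Sum.inr ((s^2:Fq), s)) = -2*s := by
    show (if s^2 = s^2 then -2*s else s^2 - s^2) = -2*s
    rw [if_pos rfl]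
  have hc2 : sc (Sum.inr ((s^2:Fq), -s)) = 2*s := by
    show (if (-s)^2 = s^2 then -2*(-s) else (-s)^2 - s^2) = 2*s
    rw [if_pos (by ring)]; ring
  rw [hc1, hc2]
  set P1 := ∏ c ∈ E, (c - s)
  set P2 := ∏ c ∈ E, (c + s)
  linear_combination (2*s*P2) * hP1 - hP2


lemma prod_sc (h2 : (2:Fq) ≠ 0) : ∏ i ∈ SS Fq, sc i = 1 := by
  rw [SS, Finset.prod_disjSum]
  have h1 : ∏ c : Fq, sc (Sum.inl c) = 1 := by
    rw [← Finset.mul_prod_erase _ _ (Finset.mem_univ (0:Fq))]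
    have hc : ∀ c ∈ Finset.univ.erase (0:Fq), sc (Sum.inl c) = c := by
      intro c hc
      simp only [Finset.mem_erase] at hc
      show (if c = 0 then -1 else c) = c
      rw [if_neg hc.1]
    rw [Finset.prod_congr rfl hc, prod_erase_zero h2]
    show (if (0:Fq) = 0 then (-1:Fq) else 0) * (-1) = 1
    rw [if_pos rfl]; ring
  have h2' : ∏ p ∈ (Finset.univ.filter (fun k : Fq => k ≠ 0 ∧ IsSquare k)) ×ˢ Finset.univ,
      sc (Sum.inr p) = 1 := by
    rw [Finset.prod_product]
    apply Finset.prod_eq_one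
    intro k hk
    simp only [Finset.mem_filter] at hk
    obtain ⟨r, hr⟩ := hk.2.2
    have hr0 : r ≠ 0 := by
      intro h; apply hk.2.1; rw [hr, h, mul_zero]
    have hk2 : k = r^2 := by rw [hr]; ring
    rw [hk2]
    exact prod_sc_gamma h2 r hr0
  rw [h1, h2', one_mul]

lemma piMap_inl (c : Fq) : piMap (Sum.inl c)
    = if c = 0 then Sum.inl 0 else Sum.inr (((2*c)⁻¹)^2, -(2*c)⁻¹) := rfl

lemma piMap_inr (k c : Fq) : piMap (Sum.inr (k, c))
    = if c^2 = k then Sum.inl (-(2*c)⁻¹)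
      else Sum.inr (k/(c^2-k)^2, -c/(c^2-k)) := rfl

lemma sc_inl (c : Fq) : sc (Sum.inl c) = if c = 0 then -1 else c := rfl

lemma sc_inr (k c : Fq) : sc (Sum.inr (k, c))
    = if c^2 = k then -2*c else c^2-k := rfl

lemma mem_SS_inl (c : Fq) : (Sum.inl c : Fq ⊕ Fq × Fq) ∈ SS Fq := by
  rw [SS, Finset.inl_mem_disjSum]; exact Finset.mem_univ _

lemma mem_SS_inr {k : Fq} (c : Fq) (hk0 : k ≠ 0) (hksq : IsSquare k) :
    (Sum.inr (k, c) : Fq ⊕ Fq × Fq) ∈ SS Fq := by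
  rw [SS, Finset.inr_mem_disjSum, Finset.mem_product]
  exact ⟨Finset.mem_filter.2 ⟨Finset.mem_univ _, hk0, hksq⟩, Finset.mem_univ _⟩

lemma of_mem_SS_inr {k c : Fq} (h : (Sum.inr (k, c) : Fq ⊕ Fq × Fq) ∈ SS Fq) :
    k ≠ 0 ∧ IsSquare k := by
  rw [SS, Finset.inr_mem_disjSum, Finset.mem_product, Finset.mem_filter] at h
  exact h.1.2

lemma piMap_mem (h2 : (2:Fq) ≠ 0) : ∀ i ∈ SS Fq, piMap i ∈ SS Fq := by
  rintro (c | ⟨k, c⟩) hi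
  · rw [piMap_inl]
    by_cases hc : c = 0
    · rw [if_pos hc]; exact mem_SS_inl 0
    · rw [if_neg hc]
      have h2c : (2*c) ≠ 0 := mul_ne_zero h2 hc
      exact mem_SS_inr _ (pow_ne_zero 2 (inv_ne_zero h2c)) ⟨(2*c)⁻¹, sq _⟩
  · obtain ⟨hk0, hksq⟩ := of_mem_SS_inr hi
    rw [piMap_inr]
    by_cases hck : c^2 = k
    · rw [if_pos hck]; exact mem_SS_inl _
    · rw [if_neg hck]
      have hd : c^2 - k ≠ 0 := sub_ne_zero.2 hck
      obtain ⟨r, hr⟩ := hksq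
      refine mem_SS_inr _ (div_ne_zero hk0 (pow_ne_zero 2 hd)) ⟨r/(c^2-k), ?_⟩
      rw [hr, div_mul_div_comm, ← sq, ← sq]

lemma piMap_invol (h2 : (2:Fq) ≠ 0) : ∀ i ∈ SS Fq, piMap (piMap i) = i := by
  rintro (c | ⟨k, c⟩) hi
  · rw [piMap_inl]
    by_cases hc : c = 0
    · rw [if_pos hc, piMap_inl, if_pos rfl, hc]
    · have h2c : (2*c) ≠ 0 := mul_ne_zero h2 hc
      rw [if_neg hc, piMap_inr, if_pos (by ring), Sum.inl.injEq]
      field_simp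
  · obtain ⟨hk0, _⟩ := of_mem_SS_inr hi
    rw [piMap_inr]
    by_cases hck : c^2 = k
    · have hc : c ≠ 0 := by
        intro h; apply hk0; rw [← hck, h]; ring
      have h2c : (2*c) ≠ 0 := mul_ne_zero h2 hc
      rw [if_pos hck, piMap_inl, if_neg (neg_ne_zero.2 (inv_ne_zero h2c)),
        Sum.inr.injEq, Prod.mk.injEq]
      constructor
      · rw [← hck]; field_simp
      · field_simp
    · have hd : c^2 - k ≠ 0 := sub_ne_zero.2 hck
      rw [if_neg hck, piMap_inr]
      have hd2 : (-c/(c^2-k))^2 - k/(c^2-k)^2 = (c^2-k)⁻¹ := by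
        field_simp
      have hck2 : (-c/(c^2-k))^2 ≠ k/(c^2-k)^2 := by
        rw [← sub_ne_zero, hd2]
        exact inv_ne_zero hd
      rw [if_neg hck2, Sum.inr.injEq, Prod.mk.injEq, hd2]
      constructor
      · field_simp
      · field_simp

end BInvAux2

section Fside

open BInvAux BInvAux2

variable {F : Type*} [Field F] {Fq : Type*} [Field Fq] [Algebra Fq F]

noncomputable def lin (u v w : F) : MvPolynomial (Fin 3) F :=
  C u * X 2 + C v * X 1 + C w * X 0

lemma lin_ext {u v w u' v' w' : F} (h1 : u = u') (h2 : v = v') (h3 : w = w') :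
    lin u v w = lin u' v' w' := by rw [h1, h2, h3]

lemma tau_lin (u v w : F) : τA F (lin u v w) = lin w (-v) u := by
  simp [τA, lin, Matrix.cons_val_zero, Matrix.cons_val_one, Matrix.head_cons,
    Matrix.cons_val_two, Matrix.vecTail, Matrix.vecHead]
  ring

lemma sigma_lin (e u v w : F) :
    σP F e (lin u v w) = lin u (2*e*u + v) (e^2*u + e*v + w) := by
  simp [σP, lin, Matrix.cons_val_zero, Matrix.cons_val_one, Matrix.head_cons,
    Matrix.cons_val_two, Matrix.vecTail, Matrix.vecHead]
  ring

lemma C_mul_lin (s u v w : F) : C s * lin u v w = lin (s*u) (s*v) (s*w) := by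
  simp only [lin, C_mul]
  ring

noncomputable def LL (F : Type*) [Field F] (Fq : Type*) [Field Fq] [Algebra Fq F] :
    Fq ⊕ Fq × Fq → MvPolynomial (Fin 3) F :=
  Sum.elim (fun c => lin 0 1 (algebraMap Fq F c))
    (fun p => lin 1 (algebraMap Fq F (2*p.2)) (algebraMap Fq F (p.2^2 - p.1)))

noncomputable def shift (d : Fq) : Fq ⊕ Fq × Fq → Fq ⊕ Fq × Fq :=
  Sum.elim (fun c => .inl (c + d)) (fun p => .inr (p.1, p.2 + d))

lemma sigma_LL (d : Fq) (i : Fq ⊕ Fq × Fq) :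
    σP F (algebraMap Fq F d) (LL F Fq i) = LL F Fq (shift d i) := by
  rcases i with c | ⟨k, c⟩
  · simp only [LL, shift, Sum.elim_inl, sigma_lin]
    apply lin_ext
    · rfl
    · ring
    · simp only [mul_zero, zero_add, mul_one, one_mul, zero_mul, add_zero]
      rw [← map_add]
      congr 1
      ring
  · simp only [LL, shift, Sum.elim_inr, sigma_lin]
    apply lin_ext
    · rfl
    · rw [mul_one, show (2 : F) * algebraMap Fq F d = algebraMap Fq F (2*d) by
        rw [map_mul, map_ofNat], ← map_add]
      congr 1
      ring
    · rw [mul_one, ← map_pow, ← map_mul, ← map_add, ← map_add]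
      congr 1
      ring

lemma tau_LL [Fintype Fq] (h2 : (2:Fq) ≠ 0) :
    ∀ i ∈ SS Fq, τA F (LL F Fq i) = C (algebraMap Fq F (sc i)) * LL F Fq (piMap i) := by
  rintro (c | ⟨k, c⟩) hi
  · simp only [LL, Sum.elim_inl, tau_lin]
    by_cases hc : c = 0
    · rw [sc_inl, if_pos hc, piMap_inl, if_pos hc]
      simp only [LL, Sum.elim_inl, C_mul_lin]
      apply lin_ext
      · rw [hc, map_zero, mul_zero]
      · rw [map_neg, map_one, mul_one]
      · rw [map_zero, mul_zero]
    · have h2c : (2*c) ≠ 0 := mul_ne_zero h2 hc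
      rw [sc_inl, if_neg hc, piMap_inl, if_neg hc]
      simp only [LL, Sum.elim_inr, C_mul_lin]
      apply lin_ext
      · rw [mul_one]
      · rw [← map_mul, show c * (2 * -(2*c)⁻¹) = -1 by field_simp, map_neg, map_one]
      · rw [show (-(2*c)⁻¹)^2 - ((2*c)⁻¹)^2 = 0 by ring, map_zero, mul_zero]
  · obtain ⟨hk0, _⟩ := of_mem_SS_inr hi
    simp only [LL, Sum.elim_inr, tau_lin]
    by_cases hck : c^2 = k
    · have hc : c ≠ 0 := by
        intro h; apply hk0; rw [← hck, h]; ring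
      have h2c : (2*c) ≠ 0 := mul_ne_zero h2 hc
      rw [sc_inr, if_pos hck, piMap_inr, if_pos hck]
      simp only [LL, Sum.elim_inl, C_mul_lin]
      apply lin_ext
      · rw [show c^2 - k = 0 by rw [hck]; ring, map_zero, mul_zero]
      · rw [← map_neg, mul_one]
        congr 1
        ring
      · rw [← map_mul, show -2*c * -(2*c)⁻¹ = 1 by field_simp, map_one]
    · have hd : c^2 - k ≠ 0 := sub_ne_zero.2 hck
      rw [sc_inr, if_neg hck, piMap_inr, if_neg hck]
      simp only [LL, Sum.elim_inr, C_mul_lin]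
      apply lin_ext
      · rw [mul_one]
      · rw [← map_neg, ← map_mul]
        congr 1
        field_simp
      · rw [← map_mul, show (c^2-k) * ((-c/(c^2-k))^2 - k/(c^2-k)^2) = 1 by
          field_simp, map_one]

end Fside

open BInvAux BInvAux2

/-- `B = β·∏_{k ∈ Q} γ_k` (product over the nonzero quadratic residues of `F_q`) is
`SL₂(F_q)`-invariant: it is fixed by every `σ_c` and by `τ`. -/
theorem B_invariant (F : Type*) [Field F] (p n q : ℕ) (hp : p.Prime) (hp2 : p ≠ 2)
    [CharP F p] (hn : n ≠ 0) (hq : q = p ^ n)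
    (Fq : Type*) [Field Fq] [Fintype Fq] [Algebra Fq F] (hcard : Fintype.card Fq = q)
    (β B : MvPolynomial (Fin 3) F)
    (hβ : β = ∏ c : Fq, (X 1 + C (algebraMap Fq F c) * X 0))
    (hB : B = β * ∏ k ∈ Finset.univ.filter (fun k : Fq => k ≠ 0 ∧ IsSquare k),
      ∏ c : Fq, (X 2 + C (2 * algebraMap Fq F c) * X 1 +
        C ((algebraMap Fq F c) ^ 2 - algebraMap Fq F k) * X 0)) :
    (∀ c : Fq, σP F (algebraMap Fq F c) B = B) ∧ τA F B = B := by
  have h2F : (2:F) ≠ 0 := by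
    intro h
    have h2 : ((2:ℕ):F) = 0 := by exact_mod_cast h
    have hdvd : p ∣ 2 := (CharP.cast_eq_zero_iff F p 2).1 h2
    exact hp2 ((Nat.prime_dvd_prime_iff_eq hp Nat.prime_two).1 hdvd)
  have h2q : (2:Fq) ≠ 0 := by
    intro h
    apply h2F
    have h' : (algebraMap Fq F) (2:Fq) = 2 := map_ofNat _ 2
    rw [← h', h, map_zero]
  have hBL : B = ∏ i ∈ SS Fq, LL F Fq i := by
    rw [hB, hβ, SS, Finset.prod_disjSum, Finset.prod_product]
    congr 1
    · apply Finset.prod_congr rfl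
      intro c _
      show _ = LL F Fq (Sum.inl c)
      simp only [LL, Sum.elim_inl, lin, C_0, C_1]
      ring
    · apply Finset.prod_congr rfl
      intro k _
      apply Finset.prod_congr rfl
      intro c _
      show _ = LL F Fq (Sum.inr (k, c))
      simp only [LL, Sum.elim_inr, lin, C_1, map_mul, map_sub, map_pow, map_ofNat]
      ring
  constructor
  · intro d
    rw [hBL, map_prod]
    rw [Finset.prod_congr rfl (fun i _ => sigma_LL d i)]
    apply Finset.prod_nbij' (shift d) (shift (-d))
    · rintro (c | ⟨k, c⟩) hi
      · exact mem_SS_inl _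
      · obtain ⟨hk0, hksq⟩ := of_mem_SS_inr hi
        exact mem_SS_inr _ hk0 hksq
    · rintro (c | ⟨k, c⟩) hi
      · exact mem_SS_inl _
      · obtain ⟨hk0, hksq⟩ := of_mem_SS_inr hi
        exact mem_SS_inr _ hk0 hksq
    · rintro (c | ⟨k, c⟩) _
      · simp [shift]
      · simp [shift]
    · rintro (c | ⟨k, c⟩) _
      · simp [shift]
      · simp [shift]
    · intro i _
      rfl
  · rw [hBL, map_prod]
    rw [Finset.prod_congr rfl (tau_LL h2q)]
    rw [Finset.prod_mul_distrib]
    have hs : ∏ i ∈ SS Fq, (C (algebraMap Fq F (sc i)) : MvPolynomial (Fin 3) F) = 1 := by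
      rw [← map_prod, ← map_prod, prod_sc h2q, map_one, map_one]
    have hperm : ∏ i ∈ SS Fq, LL F Fq (piMap i) = ∏ i ∈ SS Fq, LL F Fq i :=
      Finset.prod_nbij' piMap piMap (piMap_mem h2q) (piMap_mem h2q)
        (piMap_invol h2q) (piMap_invol h2q) (fun a _ => rfl)
    rw [hs, hperm, one_mul, ← hBL]
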